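/- Let μ be the uniform distribution on [-1,1], with C(s) = (s-1)^2/4 for s in [-1,1] and P(a) = (a+1)^2/4 for a in [-1,1]. Then for each s in (0,1], the unique root α in [-1,0) of the equation P'(α)(s-α) = C(s) - P(α) is α = s - 2√s. -/

import Mathlib

open Set

private lemma hasDerivAt_q (x : ℝ) :
    HasDerivAt (fun a : ℝ => (a + 1) ^ 2 / 4) ((x + 1) / 2) x := by
  have h := ((((hasDerivAt_id x).add_const 1).pow 2).div_const 4)
  refine h.congr_deriv ?_
  simp [id]; ring

theorem stmt_4 (C P : ℝ → ℝ)
    (hC : ∀ s ∈ Icc (-1 : ℝ) 1, C s = (s - 1) ^ 2 / 4)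
    (hP : ∀ a ∈ Icc (-1 : ℝ) 1, P a = (a + 1) ^ 2 / 4) :
    ∀ s ∈ Ioc (0 : ℝ) 1, ∀ α ∈ Ico (-1 : ℝ) 0,
      (deriv P α * (s - α) = C s - P α ↔ α = s - 2 * Real.sqrt s) := by
  intro s hs α hα
  obtain ⟨hs0, hs1⟩ := hs
  obtain ⟨hα1, hα0⟩ := hα
  have hsqnn : (0:ℝ) ≤ Real.sqrt s := Real.sqrt_nonneg s
  have hsq : Real.sqrt s ^ 2 = s := Real.sq_sqrt hs0.le
  have hsqpos : 0 < Real.sqrt s := Real.sqrt_pos.mpr hs0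
  have hCs : C s = (s - 1) ^ 2 / 4 := hC s ⟨by linarith, hs1⟩
  have hPα : P α = (α + 1) ^ 2 / 4 := hP α ⟨hα1, by linarith⟩
  rcases eq_or_lt_of_le hα1 with h1 | h1
  · -- α = -1
    subst h1
    have hd : deriv P (-1) = 0 := by
      by_cases h : DifferentiableAt ℝ P (-1)
      · have hu : UniqueDiffWithinAt ℝ (Icc (-1:ℝ) 1) (-1) :=
          (uniqueDiffOn_Icc (by norm_num)) (-1) (by norm_num)
        have h1 : HasDerivWithinAt P (deriv P (-1)) (Icc (-1:ℝ) 1) (-1) :=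
          h.hasDerivAt.hasDerivWithinAt
        have hf : HasDerivWithinAt (fun a : ℝ => (a + 1) ^ 2 / 4) 0 (Icc (-1:ℝ) 1) (-1) := by
          simpa using (hasDerivAt_q (-1)).hasDerivWithinAt
        have h2 : HasDerivWithinAt P 0 (Icc (-1:ℝ) 1) (-1) :=
          hf.congr (fun y hy => hP y hy) (hP (-1) (by norm_num))
        rw [← h1.derivWithin hu, h2.derivWithin hu]
      · exact deriv_zero_of_not_differentiableAt h
    rw [hd, hCs, hPα]
    constructor
    · intro h
      have hs' : s = 1 := by nlinarith
      rw [hs']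
      norm_num
    · intro h
      have : (Real.sqrt s - 1) ^ 2 = 0 := by nlinarith
      have : Real.sqrt s = 1 := by nlinarith
      nlinarith
  · -- α ∈ (-1, 0)
    have hd : deriv P α = (α + 1) / 2 := by
      have hmem : Icc (-1:ℝ) 1 ∈ nhds α := Icc_mem_nhds h1 (by linarith)
      have heq : P =ᶠ[nhds α] fun a => (a + 1) ^ 2 / 4 :=
        Filter.eventuallyEq_of_mem hmem hP
      rw [heq.deriv_eq, (hasDerivAt_q α).deriv]
    rw [hd, hCs, hPα]
    constructor
    · intro h
      have hfac : (α - (s - 2 * Real.sqrt s)) * (α - (s + 2 * Real.sqrt s)) = 0 := by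
        nlinarith
      have hne : α - (s + 2 * Real.sqrt s) ≠ 0 := by nlinarith
      have := mul_eq_zero.mp hfac
      rcases this with h' | h'
      · linarith
      · exact absurd h' hne
    · intro h
      subst h
      nlinarith
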